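/- Let σ > −1/2 and s > 0, and let p_k(x) = φ_k(x)·e^{sx²/2} (these are the generalized Hermite polynomials). Then for every odd k ∈ ℕ and every x ≠ 0: p_k(x)/x = Σ_{ℓ ∈ {0,2,4,…,k−1}} (−1)^{(k−ℓ−1)/2} · √( (2s·∏_{r∈{ℓ+2,ℓ+4,…,k−1}} r) / (∏_{r∈{ℓ+1,ℓ+3,…,k}} (r+2σ)) ) · p_ℓ(x), where an empty product equals 1 (so the numerator product is 1 when ℓ = k−1). -/

import Mathlib

open MeasureTheory Real

noncomputable section

/-- The even part of a function. -/
def evenPart (φ : ℝ → ℝ) : ℝ → ℝ := fun x => (φ x + φ (-x)) / 2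

/-- The odd part of a function. -/
def oddPart (φ : ℝ → ℝ) : ℝ → ℝ := fun x => (φ x - φ (-x)) / 2

/-- For an odd smooth function ψ, `invX ψ` is the smooth function η with ψ(x) = x·η(x). -/
def invX (ψ : ℝ → ℝ) : ℝ → ℝ := fun x => if x = 0 then deriv ψ 0 else ψ x / x

/-- The Dunkl operator `T_σ φ = φ' + 2σ·x⁻¹(φ_odd)`. -/
def dunklT (σ : ℝ) (φ : ℝ → ℝ) : ℝ → ℝ := fun x => deriv φ x + 2 * σ * invX (oddPart φ) x

/-- The Dunkl harmonic oscillator `L_σ φ = -T_σ(T_σ φ) + s²x²φ`. -/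
def dunklL (σ s : ℝ) (φ : ℝ → ℝ) : ℝ → ℝ :=
  fun x => -dunklT σ (dunklT σ φ) x + s ^ 2 * x ^ 2 * φ x

/-- Index pairs (i, j) with i + j ≤ m. -/
def idx (m : ℕ) : Finset (ℕ × ℕ) :=
  (Finset.range (m + 1) ×ˢ Finset.range (m + 1)).filter fun p => p.1 + p.2 ≤ m

def idxE (m : ℕ) : Finset (ℕ × ℕ) := (idx m).filter fun p => Even (p.1 + p.2)

def idxO (m : ℕ) : Finset (ℕ × ℕ) := (idx m).filter fun p => ¬ Even (p.1 + p.2)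

/-- The Schwartz norm ‖φ‖_{S^m}. -/
def SNorm (m : ℕ) (φ : ℝ → ℝ) : ℝ :=
  ∑ p ∈ idx m, ⨆ x : ℝ, |x ^ p.1 * iteratedDeriv p.2 φ x|

/-- Generic norm for σ ≥ 0: Σ_{i+j≤m} sup_x |x|^σ |x^i g_j(x)|. -/
def gNormNonneg (σ : ℝ) (m : ℕ) (g : ℕ → ℝ → ℝ) : ℝ :=
  ∑ p ∈ idx m, ⨆ x : ℝ, |x| ^ σ * |x ^ p.1 * g p.2 x|

/-- Generic norm for σ < 0 on even functions. -/
def gNormNegE (σ : ℝ) (m : ℕ) (g : ℕ → ℝ → ℝ) : ℝ :=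
  (∑ p ∈ idxE m, ((⨆ x : {x : ℝ // 0 < |x| ∧ |x| ≤ 1}, |(x : ℝ) ^ p.1 * g p.2 x|) +
      ⨆ x : {x : ℝ // 1 ≤ |x|}, |(x : ℝ)| ^ σ * |(x : ℝ) ^ p.1 * g p.2 x|)) +
  ∑ p ∈ idxO m, ⨆ x : {x : ℝ // x ≠ 0}, |(x : ℝ)| ^ σ * |(x : ℝ) ^ p.1 * g p.2 x|

/-- Generic norm for σ < 0 on odd functions. -/
def gNormNegO (σ : ℝ) (m : ℕ) (g : ℕ → ℝ → ℝ) : ℝ :=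
  (∑ p ∈ idxO m, ((⨆ x : {x : ℝ // 0 < |x| ∧ |x| ≤ 1}, |(x : ℝ) ^ p.1 * g p.2 x|) +
      ⨆ x : {x : ℝ // 1 ≤ |x|}, |(x : ℝ)| ^ σ * |(x : ℝ) ^ p.1 * g p.2 x|)) +
  ∑ p ∈ idxE m, ⨆ x : {x : ℝ // x ≠ 0}, |(x : ℝ)| ^ σ * |(x : ℝ) ^ p.1 * g p.2 x|

/-- The family of iterated derivatives of φ. -/
def derivFam (φ : ℝ → ℝ) : ℕ → ℝ → ℝ := fun j => iteratedDeriv j φ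

/-- The family of iterates of the Dunkl operator applied to φ. -/
def dunklFam (σ : ℝ) (φ : ℝ → ℝ) : ℕ → ℝ → ℝ := fun j => (dunklT σ)^[j] φ

/-- Weakly perturbed Schwartz norm ‖φ‖_{S_{w,σ}^m} for even φ. -/
def SwNormEven (σ : ℝ) (m : ℕ) (φ : ℝ → ℝ) : ℝ :=
  if 0 ≤ σ then gNormNonneg σ m (derivFam φ) else gNormNegE σ m (derivFam φ)

/-- Weakly perturbed Schwartz norm ‖φ‖_{S_{w,σ}^m} for odd φ. -/
def SwNormOdd (σ : ℝ) (m : ℕ) (φ : ℝ → ℝ) : ℝ :=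
  if 0 ≤ σ then gNormNonneg σ m (derivFam φ) else gNormNegO σ m (derivFam φ)

/-- Perturbed Schwartz norm ‖φ‖_{S_σ^m} for even φ. -/
def SpNormEven (σ : ℝ) (m : ℕ) (φ : ℝ → ℝ) : ℝ :=
  if 0 ≤ σ then gNormNonneg σ m (dunklFam σ φ) else gNormNegE σ m (dunklFam σ φ)

/-- Perturbed Schwartz norm ‖φ‖_{S_σ^m} for odd φ. -/
def SpNormOdd (σ : ℝ) (m : ℕ) (φ : ℝ → ℝ) : ℝ :=
  if 0 ≤ σ then gNormNonneg σ m (dunklFam σ φ) else gNormNegO σ m (dunklFam σ φ)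

/-- Perturbed Schwartz norm for a general φ: the sum of the norms of its even and odd parts. -/
def SpNorm (σ : ℝ) (m : ℕ) (φ : ℝ → ℝ) : ℝ :=
  SpNormEven σ m (evenPart φ) + SpNormOdd σ m (oddPart φ)

/-- The perturbed Sobolev norm ‖φ‖_{W_σ^m} = ⟨(1+L_σ)^m φ, φ⟩_σ^{1/2}. -/
def WNorm (σ s : ℝ) (m : ℕ) (φ : ℝ → ℝ) : ℝ :=
  Real.sqrt (∫ x : ℝ, ((fun ψ => ψ + dunklL σ s ψ)^[m] φ) x * φ x * |x| ^ (2 * σ))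

/-- The Dunkl creation operator `B' φ = sxφ - T_σ φ`. -/
def Bop' (σ s : ℝ) (φ : ℝ → ℝ) : ℝ → ℝ := fun x => s * x * φ x - dunklT σ φ x

/-- The generalized Hermite functions φ_k. -/
def hermiteFn (σ s : ℝ) : ℕ → ℝ → ℝ
  | 0 => fun x => s ^ ((2 * σ + 1) / 4) * (Real.Gamma (σ + 1 / 2)) ^ (-(1 / 2) : ℝ) *
      Real.exp (-s * x ^ 2 / 2)
  | (k + 1) =>
      if Even (k + 1) then
        fun x => (2 * ((k : ℝ) + 1) * s) ^ (-(1 / 2) : ℝ) * Bop' σ s (hermiteFn σ s k) x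
      else
        fun x => (2 * ((k : ℝ) + 1 + 2 * σ) * s) ^ (-(1 / 2) : ℝ) * Bop' σ s (hermiteFn σ s k) x

/-- The perturbed factorial m!_σ. -/
def pfact (σ : ℝ) : ℕ → ℝ
  | 0 => 1
  | (m + 1) =>
      if Even (m + 1) then pfact σ m * ((m : ℝ) + 1)
      else pfact σ m * ((m : ℝ) + 1 + 2 * σ)

/-- The generalized Hermite polynomials p_k = φ_k · e^{sx²/2}. -/
def genHermitePoly (σ s : ℝ) (k : ℕ) : ℝ → ℝ :=
  fun x => hermiteFn σ s k x * Real.exp (s * x ^ 2 / 2)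

end
noncomputable section

def cf (σ s : ℝ) (k : ℕ) : ℝ :=
  if Even k then (2 * (k : ℝ) * s) ^ (-(1 / 2) : ℝ)
  else (2 * ((k : ℝ) + 2 * σ) * s) ^ (-(1 / 2) : ℝ)

def lam (σ s : ℝ) (k : ℕ) : ℝ :=
  if Even k then Real.sqrt (2 * (k : ℝ) * s) else Real.sqrt (2 * ((k : ℝ) + 2 * σ) * s)

def pk (σ s : ℝ) : ℕ → ℝ → ℝ
  | 0 => fun _ => s ^ ((2 * σ + 1) / 4) * (Real.Gamma (σ + 1 / 2)) ^ (-(1 / 2) : ℝ)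
  | 1 => fun x => cf σ s 1 * (2 * s * x * pk σ s 0 x)
  | (k + 2) => fun x =>
      cf σ s (k + 2) * (2 * s * x * pk σ s (k + 1) x - lam σ s (k + 1) * pk σ s k x)

def Cc (σ s : ℝ) (n j : ℕ) : ℝ :=
  (-1 : ℝ) ^ (n - j) *
    Real.sqrt ((2 * s * ∏ i ∈ Finset.range (n - j), (2 * (j : ℝ) + 2 + 2 * (i : ℝ))) /
      (∏ i ∈ Finset.range (n - j + 1), (2 * (j : ℝ) + 1 + 2 * (i : ℝ) + 2 * σ)))

end

noncomputable section

lemma lam_zero (σ s : ℝ) : lam σ s 0 = 0 := by simp [lam]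

lemma pk_succ (σ s : ℝ) (k : ℕ) :
    pk σ s (k + 1) = fun x =>
      cf σ s (k + 1) * (2 * s * x * pk σ s k x - lam σ s k * pk σ s (k - 1) x) := by
  match k with
  | 0 => funext x; simp [pk, lam_zero]
  | (n + 1) => rfl

lemma hermite_step (σ s : ℝ) (k : ℕ) :
    hermiteFn σ s (k + 1) = fun x => cf σ s (k + 1) * Bop' σ s (hermiteFn σ s k) x := by
  by_cases h : Even (k + 1)
  · simp only [hermiteFn, if_pos h, cf, if_pos h]
    norm_num [Nat.cast_add]
  · simp only [hermiteFn, if_neg h, cf, if_neg h]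
    norm_num [Nat.cast_add]

lemma pk_diff (σ s : ℝ) : ∀ k, Differentiable ℝ (pk σ s k) := by
  have H : ∀ k, Differentiable ℝ (pk σ s k) ∧ Differentiable ℝ (pk σ s (k + 1)) := by
    intro k
    induction k with
    | zero =>
      constructor
      · simp only [pk]; exact differentiable_const _
      · simp only [pk]
        exact (((differentiable_const (2 * s)).mul differentiable_id).mul
          (differentiable_const _)).const_mul _
    | succ n ih =>
      refine ⟨ih.2, ?_⟩
      simp only [pk]
      exact ((((differentiable_const (2 * s)).mul differentiable_id).mul ih.2).sub
        (ih.1.const_mul _)).const_mul _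
  exact fun k => (H k).1

lemma pk_deriv2 (σ s : ℝ) (k : ℕ) (x : ℝ) :
    deriv (pk σ s (k + 2)) x = cf σ s (k + 2) * (2 * s * pk σ s (k + 1) x
      + 2 * s * x * deriv (pk σ s (k + 1)) x - lam σ s (k + 1) * deriv (pk σ s k) x) := by
  have h2 : HasDerivAt (fun y : ℝ => 2 * s * y) (2 * s) x := by
    simpa using (hasDerivAt_id x).const_mul (2 * s)
  have h := (((h2.mul (pk_diff σ s (k + 1) x).hasDerivAt).sub
    (HasDerivAt.const_mul (lam σ s (k + 1)) (pk_diff σ s k x).hasDerivAt)).const_mul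
      (cf σ s (k + 2)))
  have h3 : deriv (pk σ s (k + 2)) x = cf σ s (k + 2) * ((2 * s * pk σ s (k + 1) x
      + 2 * s * x * deriv (pk σ s (k + 1)) x) - lam σ s (k + 1) * deriv (pk σ s k) x) :=
    h.deriv
  rw [h3]

lemma pk_deriv1 (σ s : ℝ) (x : ℝ) :
    deriv (pk σ s 1) x = cf σ s 1 * (2 * s * pk σ s 0 x) := by
  have h2 : HasDerivAt (fun y : ℝ => 2 * s * y) (2 * s) x := by
    simpa using (hasDerivAt_id x).const_mul (2 * s)
  have h := (h2.mul (hasDerivAt_const x (pk σ s 0 x))).const_mul (cf σ s 1)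
  have h3 : deriv (pk σ s 1) x
      = cf σ s 1 * (2 * s * pk σ s 0 x + 2 * s * x * 0) := h.deriv
  rw [h3]; ring

lemma key (α β t : ℝ) (hα : 0 < α) (hβ : 0 < β) (h : β = α + t) :
    β ^ (-(1 / 2) : ℝ) * (t * α ^ (-(1 / 2) : ℝ) + Real.sqrt α) =
      Real.sqrt β * α ^ (-(1 / 2) : ℝ) := by
  rw [Real.rpow_neg hα.le, Real.rpow_neg hβ.le, ← Real.sqrt_eq_rpow, ← Real.sqrt_eq_rpow]
  have hA : Real.sqrt α > 0 := Real.sqrt_pos.mpr hα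
  have hB : Real.sqrt β > 0 := Real.sqrt_pos.mpr hβ
  have hA2 : Real.sqrt α ^ 2 = α := Real.sq_sqrt hα.le
  have hB2 : Real.sqrt β ^ 2 = β := Real.sq_sqrt hβ.le
  field_simp
  nlinarith [hA, hB, hA2, hB2]

lemma H0 (a : ℝ) (ha : 0 < a) : a * a ^ (-(1 / 2) : ℝ) = Real.sqrt a := by
  rw [Real.rpow_neg ha.le, ← Real.sqrt_eq_rpow, ← Real.sqrt_mul_self ha.le]
  field_simp
  rw [Real.sq_sqrt (Real.sqrt_nonneg _)]

lemma H1 (d s : ℝ) (hd : 0 < d) (hs : 0 < s) :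
    (2 * d * s) ^ (-(1 / 2) : ℝ) * (2 * s) = Real.sqrt (2 * s / d) := by
  have h1 : 0 < 2 * d * s := by positivity
  rw [Real.rpow_neg h1.le, ← Real.sqrt_eq_rpow]
  have hA2 : Real.sqrt (2 * d * s) ^ 2 = 2 * d * s := Real.sq_sqrt h1.le
  have h2 : 2 * s / d = (2 * s / Real.sqrt (2 * d * s)) ^ 2 := by
    rw [div_pow, hA2]; field_simp
  rw [h2, Real.sqrt_sq (by positivity)]
  field_simp

lemma H2 (a b s : ℝ) (ha : 0 < a) (hb : 0 < b) (hs : 0 < s) :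
    (2 * b * s) ^ (-(1 / 2) : ℝ) * Real.sqrt (2 * a * s) = Real.sqrt (a / b) := by
  have h1 : 0 < 2 * b * s := by positivity
  have h3 : a / b = (2 * a * s) / (2 * b * s) := by field_simp
  rw [Real.rpow_neg h1.le, ← Real.sqrt_eq_rpow, h3, Real.sqrt_div (by positivity),
    inv_mul_eq_div]

lemma Hsplit (A B u v : ℝ) (hA : 0 < A) (hB : 0 < B) (hu : 0 < u) (hv : 0 < v) :
    Real.sqrt ((A * u) / (B * v)) = Real.sqrt (A / B) * Real.sqrt (u / v) := by
  have h3 : (A * u) / (B * v) = (A / B) * (u / v) := by field_simp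
  rw [h3, Real.sqrt_mul (by positivity)]

lemma cf_pos (σ s : ℝ) (hσ : -(1/2) < σ) (hs : 0 < s) (k : ℕ) (hk : k ≠ 0) :
    0 < cf σ s k := by
  have hk1 : (1 : ℝ) ≤ (k : ℝ) := by exact_mod_cast Nat.one_le_iff_ne_zero.mpr hk
  unfold cf
  split
  · exact Real.rpow_pos_of_pos (by nlinarith) _
  · exact Real.rpow_pos_of_pos (by nlinarith) _

lemma pk_parity (σ s : ℝ) : ∀ k x, pk σ s k (-x) = (-1 : ℝ) ^ k * pk σ s k x := by
  have H : ∀ k, (∀ x, pk σ s k (-x) = (-1 : ℝ) ^ k * pk σ s k x) ∧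
      (∀ x, pk σ s (k + 1) (-x) = (-1 : ℝ) ^ (k + 1) * pk σ s (k + 1) x) := by
    intro k
    induction k with
    | zero =>
      constructor
      · intro x; simp [pk]
      · intro x; simp only [pk]; ring
    | succ n ih =>
      refine ⟨ih.2, fun x => ?_⟩
      simp only [pk, ih.1 x, ih.2 x]
      ring
  exact fun k => (H k).1

lemma even_add_two' (n : ℕ) : Even (n + 2) ↔ Even n := by
  simp [Nat.even_add_one, not_not]

lemma pk_lower (σ s : ℝ) (hσ : -(1/2) < σ) (hs : 0 < s) :
    ∀ k x, x ≠ 0 → deriv (pk σ s k) x + (if Even k then 0 else 2 * σ * pk σ s k x / x)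
      = lam σ s k * pk σ s (k - 1) x := by
  have base0 : ∀ x : ℝ, x ≠ 0 → deriv (pk σ s 0) x
      + (if Even 0 then 0 else 2 * σ * pk σ s 0 x / x) = lam σ s 0 * pk σ s (0 - 1) x := by
    intro x hx
    have : deriv (pk σ s 0) x = 0 := by
      have : pk σ s 0 = fun _ : ℝ => s ^ ((2 * σ + 1) / 4)
          * (Real.Gamma (σ + 1 / 2)) ^ (-(1 / 2) : ℝ) := rfl
      rw [this, deriv_const]
    rw [this, lam_zero]
    simp
  have base1 : ∀ x : ℝ, x ≠ 0 → deriv (pk σ s 1) x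
      + (if Even 1 then 0 else 2 * σ * pk σ s 1 x / x) = lam σ s 1 * pk σ s (1 - 1) x := by
    intro x hx
    rw [pk_deriv1, if_neg (by decide)]
    have h1 : pk σ s 1 x = cf σ s 1 * (2 * s * x * pk σ s 0 x) := rfl
    have hcf : cf σ s 1 = (2 * (1 + 2 * σ) * s) ^ (-(1 / 2) : ℝ) := by
      rw [cf, if_neg (by decide)]
      norm_num
    have hlam : lam σ s 1 = Real.sqrt (2 * (1 + 2 * σ) * s) := by
      rw [lam, if_neg (by decide)]
      norm_num
    have hkey : (2 * (1 + 2 * σ) * s) * (2 * (1 + 2 * σ) * s) ^ (-(1 / 2) : ℝ)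
        = Real.sqrt (2 * (1 + 2 * σ) * s) := H0 _ (by nlinarith)
    rw [h1, hcf, hlam, show (1:ℕ) - 1 = 0 from rfl]
    have hdiv : 2 * σ * ((2 * (1 + 2 * σ) * s) ^ (-(1 / 2) : ℝ) * (2 * s * x * pk σ s 0 x)) / x
        = 2 * σ * ((2 * (1 + 2 * σ) * s) ^ (-(1 / 2) : ℝ) * (2 * s * pk σ s 0 x)) := by
      field_simp
    rw [hdiv]
    linear_combination (pk σ s 0 x) * hkey
  have step : ∀ m,
      (∀ x, x ≠ 0 → deriv (pk σ s m) x + (if Even m then 0 else 2 * σ * pk σ s m x / x)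
        = lam σ s m * pk σ s (m - 1) x) →
      (∀ x, x ≠ 0 → deriv (pk σ s (m+1)) x
          + (if Even (m+1) then 0 else 2 * σ * pk σ s (m+1) x / x)
        = lam σ s (m+1) * pk σ s (m+1-1) x) →
      (∀ x, x ≠ 0 → deriv (pk σ s (m+2)) x
          + (if Even (m+2) then 0 else 2 * σ * pk σ s (m+2) x / x)
        = lam σ s (m+2) * pk σ s (m+2-1) x) := by
    intro m h0 h1 x hx
    have hmn : (0:ℝ) ≤ (m:ℝ) := Nat.cast_nonneg m
    have hd2 := pk_deriv2 σ s m x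
    have hE : pk σ s (m+1) x
        = cf σ s (m+1) * (2 * s * x * pk σ s m x - lam σ s m * pk σ s (m-1) x) :=
      congrFun (pk_succ σ s m) x
    have hE2 : pk σ s (m+2) x
        = cf σ s (m+2) * (2 * s * x * pk σ s (m+1) x - lam σ s (m+1) * pk σ s m x) := rfl
    have h1x := h1 x hx
    have h0x := h0 x hx
    rw [show m + 1 - 1 = m from rfl] at h1x
    rw [show m + 2 - 1 = m + 1 from rfl]
    by_cases he : Even m
    · have ho1 : ¬ Even (m+1) := by simp [Nat.even_add_one, he]
      have he2 : Even (m+2) := (even_add_two' m).mpr he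
      rw [if_pos he2, add_zero]
      rw [if_neg ho1] at h1x
      rw [if_pos he, add_zero] at h0x
      have hD1 : deriv (pk σ s (m+1)) x
          = lam σ s (m+1) * pk σ s m x - 2 * σ * pk σ s (m+1) x / x := by linarith
      set α := 2 * ((m:ℝ) + 1 + 2 * σ) * s with hαdef
      set β := 2 * ((m:ℝ) + 2) * s with hβdef
      have hα : 0 < α := by nlinarith
      have hβ : 0 < β := by nlinarith
      have hcfm1 : cf σ s (m+1) = α ^ (-(1/2) : ℝ) := by
        rw [cf, if_neg ho1, hαdef]; congr 1; push_cast; ring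
      have hlam1 : lam σ s (m+1) = Real.sqrt α := by
        rw [lam, if_neg ho1, hαdef]; congr 1; push_cast; ring
      have hcfm2 : cf σ s (m+2) = β ^ (-(1/2) : ℝ) := by
        rw [cf, if_pos he2, hβdef]; congr 1; push_cast; ring
      have hlam2 : lam σ s (m+2) = Real.sqrt β := by
        rw [lam, if_pos he2, hβdef]; congr 1; push_cast; ring
      have K := key α β (2*s*(1-2*σ)) hα hβ (by rw [hαdef, hβdef]; ring)
      have hxcancel : 2*s*x*(lam σ s (m+1) * pk σ s m x - 2*σ*pk σ s (m+1) x / x)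
          = 2*s*x*lam σ s (m+1)*pk σ s m x - 4*σ*s*pk σ s (m+1) x := by
        field_simp; ring
      rw [hd2, hD1, h0x, hxcancel, hE, hcfm1, hlam1, hcfm2, hlam2]
      linear_combination (2*s*x*pk σ s m x - lam σ s m * pk σ s (m-1) x) * K
    · have ho1 : Even (m+1) := Nat.even_add_one.mpr he
      have he2 : ¬ Even (m+2) := fun h => he ((even_add_two' m).mp h)
      rw [if_neg he2]
      rw [if_pos ho1, add_zero] at h1x
      rw [if_neg he] at h0x
      have hD0 : deriv (pk σ s m) x
          = lam σ s m * pk σ s (m-1) x - 2 * σ * pk σ s m x / x := by linarith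
      set α := 2 * ((m:ℝ) + 1) * s with hαdef
      set β := 2 * ((m:ℝ) + 2 + 2 * σ) * s with hβdef
      have hα : 0 < α := by nlinarith
      have hβ : 0 < β := by nlinarith
      have hcfm1 : cf σ s (m+1) = α ^ (-(1/2) : ℝ) := by
        rw [cf, if_pos ho1, hαdef]; congr 1; push_cast; ring
      have hlam1 : lam σ s (m+1) = Real.sqrt α := by
        rw [lam, if_pos ho1, hαdef]; congr 1; push_cast; ring
      have hcfm2 : cf σ s (m+2) = β ^ (-(1/2) : ℝ) := by
        rw [cf, if_neg he2, hβdef]; congr 1; push_cast; ring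
      have hlam2 : lam σ s (m+2) = Real.sqrt β := by
        rw [lam, if_neg he2, hβdef]; congr 1; push_cast; ring
      have K := key α β (2*s*(1+2*σ)) hα hβ (by rw [hαdef, hβdef]; ring)
      have hxcancel : 2*σ*(cf σ s (m+2) * (2 * s * x * pk σ s (m+1) x
            - lam σ s (m+1) * pk σ s m x))/x
          = 4*σ*s*cf σ s (m+2)*pk σ s (m+1) x
            - 2*σ*cf σ s (m+2)*lam σ s (m+1)*pk σ s m x/x := by
        field_simp; ring
      rw [hd2, h1x, hD0, hE2, hxcancel, hE, hcfm1, hlam1, hcfm2, hlam2]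
      linear_combination (2*s*x*pk σ s m x - lam σ s m * pk σ s (m-1) x) * K
  have H : ∀ k, (∀ x, x ≠ 0 → deriv (pk σ s k) x
        + (if Even k then 0 else 2 * σ * pk σ s k x / x) = lam σ s k * pk σ s (k - 1) x) ∧
      (∀ x, x ≠ 0 → deriv (pk σ s (k+1)) x
        + (if Even (k+1) then 0 else 2 * σ * pk σ s (k+1) x / x)
        = lam σ s (k+1) * pk σ s (k+1-1) x) := by
    intro k
    induction k with
    | zero => exact ⟨base0, base1⟩
    | succ n ih => exact ⟨ih.2, step n ih.1 ih.2⟩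
  exact fun k => (H k).1

lemma gauss_hasDerivAt (s x : ℝ) : HasDerivAt (fun y => Real.exp (-s * y ^ 2 / 2))
    (-s * x * Real.exp (-s * x ^ 2 / 2)) x := by
  have h : HasDerivAt (fun y : ℝ => -s * y ^ 2 / 2) (-s * x) x := by
    have := ((hasDerivAt_pow 2 x).const_mul (-s)).div_const 2
    exact this.congr_deriv (by push_cast; ring)
  simpa [mul_comm] using h.exp

lemma hermite_eq (σ s : ℝ) (hσ : -(1/2) < σ) (hs : 0 < s) :
    ∀ k x, x ≠ 0 → hermiteFn σ s k x = pk σ s k x * Real.exp (-s * x ^ 2 / 2) := by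
  intro k
  induction k with
  | zero => intro x hx; rfl
  | succ n ih =>
    intro x hx
    rw [hermite_step]
    have hev : hermiteFn σ s n =ᶠ[nhds x]
        (fun y => pk σ s n y * Real.exp (-s * y ^ 2 / 2)) := by
      filter_upwards [compl_singleton_mem_nhds hx] with y hy
      exact ih y hy
    have hd : deriv (hermiteFn σ s n) x
        = deriv (pk σ s n) x * Real.exp (-s * x ^ 2 / 2)
          + pk σ s n x * (-s * x * Real.exp (-s * x ^ 2 / 2)) := by
      rw [hev.deriv_eq]
      exact ((pk_diff σ s n x).hasDerivAt.mul (gauss_hasDerivAt s x)).deriv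
    have hodd : oddPart (hermiteFn σ s n) x
        = (if Even n then 0 else pk σ s n x * Real.exp (-s * x ^ 2 / 2)) := by
      have hnx : (-x : ℝ) ≠ 0 := neg_ne_zero.mpr hx
      unfold oddPart
      rw [ih x hx, ih (-x) hnx, pk_parity, neg_pow, neg_sq]
      by_cases he : Even n
      · rw [if_pos he, he.neg_one_pow]; ring
      · rw [if_neg he, (Nat.not_even_iff_odd.mp he).neg_one_pow]; ring
    have hinv : invX (oddPart (hermiteFn σ s n)) x
        = (if Even n then 0 else pk σ s n x * Real.exp (-s * x ^ 2 / 2)) / x := by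
      unfold invX
      rw [if_neg hx, hodd]
    have hlow := pk_lower σ s hσ hs n x hx
    have hD : deriv (pk σ s n) x
        = lam σ s n * pk σ s (n-1) x
          - (if Even n then 0 else 2 * σ * pk σ s n x / x) := by linarith
    show cf σ s (n+1) * Bop' σ s (hermiteFn σ s n) x = _
    unfold Bop' dunklT
    rw [hd, hinv, hD, ih x hx, congrFun (pk_succ σ s n) x]
    by_cases he : Even n
    · rw [if_pos he, if_pos he]; ring
    · rw [if_neg he, if_neg he]; field_simp; ring

lemma gen_eq (σ s : ℝ) (hσ : -(1/2) < σ) (hs : 0 < s) (k : ℕ) (x : ℝ) (hx : x ≠ 0) :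
    genHermitePoly σ s k x = pk σ s k x := by
  unfold genHermitePoly
  rw [hermite_eq σ s hσ hs k x hx, mul_assoc, ← Real.exp_add,
    show -s*x^2/2 + s*x^2/2 = 0 by ring, Real.exp_zero, mul_one]

lemma Cc_top (σ s : ℝ) (hσ : -(1/2) < σ) (hs : 0 < s) (n : ℕ) :
    Cc σ s n n = cf σ s (2*n+1) * (2*s) := by
  have hd : (0:ℝ) < 2*(n:ℝ)+1+2*σ := by
    have := Nat.cast_nonneg (α := ℝ) n; nlinarith
  have hodd : ¬ Even (2*n+1) := by simp [Nat.even_add_one, parity_simps]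
  unfold Cc
  rw [Nat.sub_self, cf, if_neg hodd]
  simp only [Finset.range_zero, Finset.prod_empty, zero_add, Finset.range_one,
    Finset.prod_singleton, pow_zero, one_mul, mul_one]
  rw [show 2*(((2*n+1 : ℕ):ℝ)+2*σ)*s = 2*(2*(n:ℝ)+1+2*σ)*s by push_cast; ring]
  rw [show 2*(n:ℝ)+1+2*((0:ℕ):ℝ)+2*σ = 2*(n:ℝ)+1+2*σ by push_cast; ring]
  exact (H1 _ s hd hs).symm

lemma Cc_step (σ s : ℝ) (hσ : -(1/2) < σ) (hs : 0 < s) (n j : ℕ) (hj : j ≤ n) :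
    Cc σ s (n+1) j = -(cf σ s (2*n+1+2) * lam σ s (2*n+1+1)) * Cc σ s n j := by
  have hcast : ((n - j : ℕ) : ℝ) = (n:ℝ) - (j:ℝ) := Nat.cast_sub hj
  have hP : (0:ℝ) < ∏ i ∈ Finset.range (n - j), (2 * (j : ℝ) + 2 + 2 * (i : ℝ)) :=
    Finset.prod_pos (fun i _ => by positivity)
  have hQ : (0:ℝ) < ∏ i ∈ Finset.range (n - j + 1), (2 * (j : ℝ) + 1 + 2 * (i : ℝ) + 2 * σ) :=
    Finset.prod_pos (fun i _ => by
      have h1 : (0:ℝ) ≤ (j:ℝ) := Nat.cast_nonneg j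
      have h2 : (0:ℝ) ≤ (i:ℝ) := Nat.cast_nonneg i
      nlinarith)
  have hnj : n + 1 - j = (n - j) + 1 := by omega
  have hu : (0:ℝ) < 2*(n:ℝ)+2 := by have := Nat.cast_nonneg (α := ℝ) n; nlinarith
  have hv : (0:ℝ) < 2*(n:ℝ)+3+2*σ := by have := Nat.cast_nonneg (α := ℝ) n; nlinarith
  have hodd : ¬ Even (2*n+1+2) := by simp [Nat.even_add_one, parity_simps]
  have heven : Even (2*n+1+1) := by simp [Nat.even_add_one, parity_simps]
  have hcf : cf σ s (2*n+1+2) = (2*(2*(n:ℝ)+3+2*σ)*s) ^ (-(1/2) : ℝ) := by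
    rw [cf, if_neg hodd]; congr 1; push_cast; ring
  have hlam : lam σ s (2*n+1+1) = Real.sqrt (2*(2*(n:ℝ)+2)*s) := by
    rw [lam, if_pos heven]; congr 1; push_cast; ring
  unfold Cc
  rw [hnj, pow_succ, Finset.prod_range_succ, Finset.prod_range_succ]
  rw [show 2*(j:ℝ)+2+2*((n-j : ℕ):ℝ) = 2*(n:ℝ)+2 by rw [hcast]; ring]
  rw [show 2*(j:ℝ)+1+2*((n-j+1 : ℕ):ℝ)+2*σ = 2*(n:ℝ)+3+2*σ by push_cast [hcast]; ring]
  rw [show 2*s*((∏ i ∈ Finset.range (n - j), (2 * (j : ℝ) + 2 + 2 * (i : ℝ))) * (2*(n:ℝ)+2))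
      = (2*s*∏ i ∈ Finset.range (n - j), (2 * (j : ℝ) + 2 + 2 * (i : ℝ))) * (2*(n:ℝ)+2)
      by ring]
  rw [Hsplit _ _ _ _ (by positivity) hQ hu hv]
  rw [hcf, hlam, H2 _ _ _ hu hv hs]
  ring

lemma pk_sum (σ s : ℝ) (hσ : -(1/2) < σ) (hs : 0 < s) :
    ∀ n x, pk σ s (2*n+1) x = x * ∑ j ∈ Finset.range (n+1), Cc σ s n j * pk σ s (2*j) x := by
  intro n
  induction n with
  | zero =>
    intro x
    have h1 : pk σ s (2*0+1) x = cf σ s 1 * (2 * s * x * pk σ s 0 x) := rfl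
    rw [h1, Finset.sum_range_one, Cc_top σ s hσ hs 0]
    ring
  | succ n ih =>
    intro x
    have hidx : 2*(n+1)+1 = 2*n+1+2 := by ring
    rw [hidx]
    have h1 : pk σ s (2*n+1+2) x = cf σ s (2*n+1+2) *
        (2 * s * x * pk σ s (2*n+1+1) x - lam σ s (2*n+1+1) * pk σ s (2*n+1) x) := rfl
    rw [h1, Finset.sum_range_succ]
    have hsum : ∑ j ∈ Finset.range (n+1), Cc σ s (n+1) j * pk σ s (2*j) x
        = -(cf σ s (2*n+1+2) * lam σ s (2*n+1+1)) *
            ∑ j ∈ Finset.range (n+1), Cc σ s n j * pk σ s (2*j) x := by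
      rw [Finset.mul_sum]
      refine Finset.sum_congr rfl (fun j hj => ?_)
      rw [Cc_step σ s hσ hs n j (Finset.mem_range_succ_iff.mp hj)]
      ring
    rw [hsum, ih x, show 2*(n+1) = 2*n+1+1 by ring, Cc_top σ s hσ hs (n+1),
      show 2*(n+1)+1 = 2*n+1+2 by ring]
    ring


end

theorem genHermitePoly_odd_div_x (σ s : ℝ) (hσ : -(1/2) < σ) (hs : 0 < s)
    (k : ℕ) (hk : Odd k) (x : ℝ) (hx : x ≠ 0) :
    genHermitePoly σ s k x / x =
      ∑ j ∈ Finset.range ((k + 1) / 2),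
        (-1 : ℝ) ^ ((k - 2 * j - 1) / 2) *
          Real.sqrt
            ((2 * s * ∏ i ∈ Finset.range ((k - 2 * j - 1) / 2), (2 * (j : ℝ) + 2 + 2 * i)) /
              (∏ i ∈ Finset.range ((k - 2 * j - 1) / 2 + 1), (2 * (j : ℝ) + 1 + 2 * i + 2 * σ))) *
          genHermitePoly σ s (2 * j) x := by
  obtain ⟨n, hn⟩ := hk
  subst hn
  rw [gen_eq σ s hσ hs _ x hx, pk_sum σ s hσ hs n x, mul_div_cancel_left₀ _ hx,
    show (2*n+1+1)/2 = n+1 from by omega]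
  refine Finset.sum_congr rfl (fun j hj => ?_)
  have hj' : j ≤ n := by
    simp only [Finset.mem_range] at hj; omega
  rw [show (2*n+1-2*j-1)/2 = n-j from by omega, gen_eq σ s hσ hs (2*j) x hx]
  simp only [Cc]
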